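/- Let μ = 2ℓ+2 with ℓ ≥ 1, and let κ ≥ log₂ μ. Then for any real λ ≥ 0, κ·(μ^(λ + 1/κ) - μ^λ) ≤ (log₂ μ)·(κ·(μ^λ - 1)/κ + 1), i.e., the cost increase of a node when its load increases by 1/κ is at most (log₂ μ)·(w/κ + 1) where w = κ(μ^λ - 1). -/

import Mathlib

theorem stmt_3 (ℓ μ κ lam : ℝ) (hℓ : 1 ≤ ℓ) (hμ : μ = 2 * ℓ + 2)
    (hκ : Real.logb 2 μ ≤ κ) (hlam : 0 ≤ lam) :
    κ * (μ ^ (lam + 1 / κ) - μ ^ lam) ≤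
      Real.logb 2 μ * (κ * (μ ^ lam - 1) / κ + 1) := by
  have hμ4 : (4:ℝ) ≤ μ := by nlinarith
  have hμpos : (0:ℝ) < μ := by linarith
  set L := Real.logb 2 μ with hLdef
  have hlog2 : (0:ℝ) < Real.log 2 := Real.log_pos (by norm_num)
  have hlogμ : Real.log 4 ≤ Real.log μ := Real.log_le_log (by norm_num) hμ4
  have hlog4 : Real.log 4 = 2 * Real.log 2 := by
    rw [show (4:ℝ) = 2^2 by norm_num, Real.log_pow]; ring
  have hL2 : (2:ℝ) ≤ L := by
    rw [hLdef, Real.logb, le_div_iff₀ hlog2]; linarith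
  have hκpos : (0:ℝ) < κ := by linarith
  have hLeq : L = Real.log μ / Real.log 2 := rfl
  have hlogμpos : (0:ℝ) < Real.log μ := by linarith
  -- t = log μ / κ
  set t := Real.log μ / κ with htdef
  have ht0 : 0 ≤ t := le_of_lt (div_pos hlogμpos hκpos)
  have htle : t ≤ Real.log 2 := by
    rw [htdef, div_le_iff₀ hκpos]
    have : Real.log μ = L * Real.log 2 := by
      rw [hLeq]; field_simp
    rw [this]
    nlinarith
  -- convexity of exp: exp t ≤ 1 + t / log 2 for t ∈ [0, log 2]
  have hs0 : 0 ≤ t / Real.log 2 := div_nonneg ht0 hlog2.le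
  have hs1 : t / Real.log 2 ≤ 1 := by rw [div_le_one hlog2]; exact htle
  have hconv := convexOn_exp.2 (Set.mem_univ (0:ℝ)) (Set.mem_univ (Real.log 2))
      (by linarith : (0:ℝ) ≤ 1 - t / Real.log 2) hs0 (by ring)
  have hcomb : (1 - t / Real.log 2) * 0 + t / Real.log 2 * Real.log 2 = t := by
    field_simp; ring
  simp only [smul_eq_mul] at hconv
  rw [hcomb] at hconv
  have hexp2 : Real.exp (Real.log 2) = 2 := Real.exp_log (by norm_num)
  have hexpt : Real.exp t ≤ 1 + t / Real.log 2 := by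
    rw [hexp2, Real.exp_zero] at hconv; linarith
  -- key: κ * (μ^(1/κ) - 1) ≤ L
  have hrpow : μ ^ (1/κ : ℝ) = Real.exp t := by
    rw [Real.rpow_def_of_pos hμpos, htdef]; ring_nf
  have hkey : κ * (μ ^ (1/κ : ℝ) - 1) ≤ L := by
    rw [hrpow, hLeq]
    have h1 : κ * (Real.exp t - 1) ≤ κ * (t / Real.log 2) := by
      have := hexpt; nlinarith
    have h2 : κ * (t / Real.log 2) = Real.log μ / Real.log 2 := by
      rw [htdef]; field_simp
    linarith [h1, h2 ▸ h1]
  -- finish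
  have hsplit : μ ^ (lam + 1/κ : ℝ) = μ ^ lam * μ ^ (1/κ : ℝ) :=
    Real.rpow_add hμpos _ _
  have hpowpos : (0:ℝ) < μ ^ lam := Real.rpow_pos_of_pos hμpos _
  have hcancel : κ * (μ ^ lam - 1) / κ = μ ^ lam - 1 := by
    field_simp
  rw [hcancel, hsplit]
  have : κ * (μ ^ lam * μ ^ (1/κ:ℝ) - μ ^ lam) = μ ^ lam * (κ * (μ ^ (1/κ:ℝ) - 1)) := by
    ring
  rw [this]
  have hLpos : 0 < L := by linarith
  calc μ ^ lam * (κ * (μ ^ (1/κ:ℝ) - 1)) ≤ μ ^ lam * L :=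
        mul_le_mul_of_nonneg_left hkey hpowpos.le
    _ = L * (μ ^ lam - 1 + 1) := by ring
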